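/- The splitting number 𝔰 has uncountable cofinality. -/

import Mathlib

open Set

def Splits (x a : Set ℕ) : Prop := (a ∩ x).Infinite ∧ (a \ x).Infinite

def SplittingFamily (F : Set (Set ℕ)) : Prop :=
  ∀ a : Set ℕ, a.Infinite → ∃ x ∈ F, Splits x a

def OmegaOmegaSplitting (F : Set (Set ℕ)) : Prop :=
  ∀ a : ℕ → Set ℕ, (∀ n, (a n).Infinite) →
    ∃ x ∈ F, {n | (a n ∩ x).Infinite}.Infinite ∧ {n | (a n \ x).Infinite}.Infinite

noncomputable def sNum : Cardinal :=
  sInf {c | ∃ F : Set (Set ℕ), SplittingFamily F ∧ Cardinal.mk F = c}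

noncomputable def sOmegaOmegaNum : Cardinal :=
  sInf {c | ∃ F : Set (Set ℕ), OmegaOmegaSplitting F ∧ Cardinal.mk F = c}

def ADFamily (A : Set (Set ℕ)) : Prop :=
  (∀ a ∈ A, a.Infinite) ∧ A.Pairwise fun a b => (a ∩ b).Finite

def MADFamily (A : Set (Set ℕ)) : Prop :=
  ADFamily A ∧ A.Infinite ∧ ∀ B, ADFamily B → A ⊆ B → A = B

noncomputable def aNum : Cardinal :=
  sInf {c | ∃ A : Set (Set ℕ), MADFamily A ∧ Cardinal.mk A = c}

/-- The ideal generated by an a.d. family together with the finite sets: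
`b ∈ adIdeal A` iff `b ⊆* a₀ ∪ ⋯ ∪ a_k` for finitely many members of `A`. -/
def adIdeal (A : Set (Set ℕ)) : Set (Set ℕ) :=
  {b | ∃ S : Finset (Set ℕ), ↑S ⊆ A ∧ (b \ ⋃ a ∈ S, a).Finite}

def CompSep (A : Set (Set ℕ)) : Prop :=
  ∀ b : Set ℕ, b ∉ adIdeal A → ∃ a ∈ A, a ⊆ b

noncomputable def bNum : Cardinal :=
  sInf {c | ∃ F : Set (ℕ → ℕ),
    (∀ g : ℕ → ℕ, ∃ f ∈ F, {n | g n < f n}.Infinite) ∧ Cardinal.mk F = c}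

def BlockSplitting (F : Set (Set ℕ)) : Prop :=
  ∀ s : ℕ → Finset ℕ, (∀ n, (s n).Nonempty) →
    (Pairwise fun m n => Disjoint (s m) (s n)) →
    (⋃ n, (s n : Set ℕ)) = Set.univ →
    ∃ x ∈ F, {n | (s n : Set ℕ) ⊆ x}.Infinite ∧ {n | (s n : Set ℕ) ∩ x = ∅}.Infinite

/-- `sel x false = x = x⁰`, `sel x true = xᶜ = x¹`. -/
def sel (x : Set ℕ) : Bool → Set ℕ
  | false => x
  | true => xᶜ

/-- An element of `2^{<κ}`: a binary sequence of some length `dom < κ`. -/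
structure PNode (κ : Ordinal) where
  dom : Ordinal
  dom_lt : dom < κ
  val : ∀ ξ : Ordinal, ξ < dom → Bool

/-- End-extension of nodes. -/
def PNode.Ext {κ : Ordinal} (σ τ : PNode κ) : Prop :=
  ∃ h : σ.dom ≤ τ.dom, ∀ ξ (hξ : ξ < σ.dom), σ.val ξ hξ = τ.val ξ (lt_of_lt_of_le hξ h)

-- every infinite set is split by something
lemma exists_splits (a : Set ℕ) (ha : a.Infinite) : ∃ x : Set ℕ, Splits x a := by
  obtain ⟨f⟩ : Nonempty (ℕ ↪ a) := ⟨ha.natEmbedding⟩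
  refine ⟨Set.range (fun n => (f (2*n) : ℕ)), ?_, ?_⟩
  · have hsub : Set.range (fun n => (f (2*n) : ℕ)) ⊆ a := by
      rintro y ⟨n, rfl⟩; exact (f (2*n)).2
    have : (Set.range (fun n => (f (2*n) : ℕ))).Infinite := by
      apply Set.infinite_range_of_injective
      intro m n h
      have : f (2*m) = f (2*n) := Subtype.ext h
      have := f.injective this
      omega
    exact this.mono (by intro y hy; exact ⟨hsub hy, hy⟩)
  · have : (Set.range (fun n => (f (2*n+1) : ℕ))).Infinite := by
      apply Set.infinite_range_of_injective
      intro m n h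
      have := f.injective (Subtype.ext h)
      omega
    apply this.mono
    rintro y ⟨n, rfl⟩
    refine ⟨(f (2*n+1)).2, ?_⟩
    rintro ⟨m, hm⟩
    have := f.injective (Subtype.ext hm)
    omega

lemma sNum_mem : ∃ F : Set (Set ℕ), SplittingFamily F ∧ Cardinal.mk F = sNum := by
  have : sNum ∈ {c | ∃ F : Set (Set ℕ), SplittingFamily F ∧ Cardinal.mk F = c} := by
    apply csInf_mem
    exact ⟨_, Set.univ, fun a ha => by obtain ⟨x, hx⟩ := exists_splits a ha; exact ⟨x, trivial, hx⟩, rfl⟩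
  exact this

lemma not_splitting_of_lt {F : Set (Set ℕ)} (h : Cardinal.mk F < sNum) : ¬ SplittingFamily F := by
  intro hF
  have hmem : Cardinal.mk F ∈ {c | ∃ F : Set (Set ℕ), SplittingFamily F ∧ Cardinal.mk F = c} :=
    ⟨F, hF, rfl⟩
  exact absurd (csInf_le' hmem) (not_le_of_gt h)

/-- A family of size `< sNum` fails to split some infinite subset of any infinite set. -/
lemma step_lemma {F : Set (Set ℕ)} (h : Cardinal.mk F < sNum) (a : Set ℕ) (ha : a.Infinite) :
    ∃ b, b ⊆ a ∧ b.Infinite ∧ ∀ x ∈ F, ¬ Splits x b := by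
  obtain ⟨f⟩ : Nonempty (ℕ ↪ a) := ⟨ha.natEmbedding⟩
  set g : ℕ → ℕ := fun n => (f n : ℕ) with hg
  have hginj : Function.Injective g := fun m n hmn => f.injective (Subtype.ext hmn)
  set F' : Set (Set ℕ) := (fun x => g ⁻¹' x) '' F with hF'
  have hF'lt : Cardinal.mk F' < sNum := lt_of_le_of_lt Cardinal.mk_image_le h
  have hns := not_splitting_of_lt hF'lt
  rw [SplittingFamily] at hns
  push_neg at hns
  obtain ⟨b', hb'inf, hb'⟩ := hns
  refine ⟨g '' b', ?_, hb'inf.image (hginj.injOn), ?_⟩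
  · rintro y ⟨n, _, rfl⟩; exact (f n).2
  · intro x hx hsp
    have hx' := hb' (g ⁻¹' x) ⟨x, hx, rfl⟩
    rw [Splits] at hx'
    push_neg at hx'
    obtain ⟨hsp1, hsp2⟩ := hsp
    rcases Set.infinite_or_finite (b' ∩ g ⁻¹' x) with hi | hfin
    · have hfin2 := hx' hi
      have : g '' b' \ x = g '' (b' \ g ⁻¹' x) := (Set.image_diff_preimage).symm
      exact hsp2 (by rw [this]; exact hfin2.image g)
    · have : g '' b' ∩ x = g '' (b' ∩ g ⁻¹' x) := (Set.image_inter_preimage g b' x).symm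
      exact hsp1 (by rw [this]; exact hfin.image g)

/-- Chain-and-diagonal: if each `G n` admits the hereditary avoidance step,
then one infinite set avoids splitting by every member of every `G n`. -/
lemma chain_lemma (G : ℕ → Set (Set ℕ))
    (hstep : ∀ n (s : Set ℕ), s.Infinite → ∃ b, b ⊆ s ∧ b.Infinite ∧ ∀ x ∈ G n, ¬ Splits x b) :
    ∃ b : Set ℕ, b.Infinite ∧ ∀ n, ∀ x ∈ G n, ¬ Splits x b := by
  choose c hc1 hc2 hc3 using hstep
  -- the chain
  let A : ℕ → {s : Set ℕ // s.Infinite} := fun n =>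
    Nat.rec ⟨c 0 Set.univ Set.infinite_univ, hc2 0 _ _⟩
      (fun k p => ⟨c (k+1) p.1 p.2, hc2 _ _ _⟩) n
  have hA0 : (A 0).1 = c 0 Set.univ Set.infinite_univ := rfl
  have hAs : ∀ n, (A (n+1)).1 = c (n+1) (A n).1 (A n).2 := fun n => rfl
  have hAvoid : ∀ n, ∀ x ∈ G n, ¬ Splits x (A n).1 := by
    intro n
    cases n with
    | zero => exact hc3 0 _ _
    | succ m => exact hc3 (m+1) _ _
  have hchain : ∀ n, (A (n+1)).1 ⊆ (A n).1 := fun n => by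
    rw [hAs]; exact hc1 _ _ _
  have hmono : ∀ m n, n ≤ m → (A m).1 ⊆ (A n).1 := by
    intro m n h
    induction h with
    | refl => exact subset_rfl
    | step h ih => exact fun y hy => ih (hchain _ hy)
  -- the diagonal
  have hpick : ∀ (n : ℕ) (bound : ℕ), ∃ y ∈ (A n).1, bound < y := fun n bound =>
    (A n).2.exists_gt bound
  let k : ℕ → ℕ := fun n =>
    Nat.rec ((hpick 0 0).choose) (fun m km => (hpick (m+1) km).choose) n
  have hk0 : k 0 = (hpick 0 0).choose := rfl
  have hks : ∀ n, k (n+1) = (hpick (n+1) (k n)).choose := fun n => rfl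
  have hkmem : ∀ n, k n ∈ (A n).1 := by
    intro n
    cases n with
    | zero => exact (hpick 0 0).choose_spec.1
    | succ m => exact (hpick (m+1) (k m)).choose_spec.1
  have hklt : ∀ n, k n < k (n+1) := fun n => (hpick (n+1) (k n)).choose_spec.2
  have hkmono : StrictMono k := strictMono_nat_of_lt_succ hklt
  refine ⟨Set.range k, Set.infinite_range_of_injective hkmono.injective, ?_⟩
  intro n x hx hsp
  have hdiff : (Set.range k \ (A n).1).Finite := by
    apply (Set.finite_Iio n).image k |>.subset
    rintro y ⟨⟨m, rfl⟩, hnot⟩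
    by_cases hmn : n ≤ m
    · exact absurd (hmono m n hmn (hkmem m)) hnot
    · exact ⟨m, Set.mem_Iio.mpr (by omega), rfl⟩
  have hx' := hAvoid n x hx
  rw [Splits] at hx'
  push_neg at hx'
  obtain ⟨hsp1, hsp2⟩ := hsp
  rcases Set.infinite_or_finite ((A n).1 ∩ x) with hi | hfin
  · refine hsp2 ((hdiff.union (hx' hi)).subset ?_)
    intro y ⟨hy1, hy2⟩
    by_cases hyA : y ∈ (A n).1
    · exact Or.inr ⟨hyA, hy2⟩
    · exact Or.inl ⟨hy1, hyA⟩
  · refine hsp1 ((hdiff.union hfin).subset ?_)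
    intro y ⟨hy1, hy2⟩
    by_cases hyA : y ∈ (A n).1
    · exact Or.inr ⟨hyA, hy2⟩
    · exact Or.inl ⟨hy1, hyA⟩

lemma aleph0_lt_sNum : Cardinal.aleph0 < sNum := by
  by_contra hle
  rw [not_lt] at hle
  obtain ⟨F, hFsplit, hFmk⟩ := sNum_mem
  have hcount : F.Countable := by
    rw [← Cardinal.le_aleph0_iff_set_countable, hFmk]; exact hle
  have hFne : F.Nonempty := by
    rcases Set.eq_empty_or_nonempty F with h | h
    · obtain ⟨x, hx, -⟩ := hFsplit Set.univ Set.infinite_univ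
      rw [h] at hx; exact absurd hx (Set.notMem_empty x)
    · exact h
  obtain ⟨h, hhr⟩ := hcount.exists_eq_range hFne
  have hstep : ∀ n (s : Set ℕ), s.Infinite →
      ∃ b, b ⊆ s ∧ b.Infinite ∧ ∀ x ∈ ({h n} : Set (Set ℕ)), ¬ Splits x b := by
    intro n s hs
    rcases Set.infinite_or_finite (s ∩ h n) with hi | hfin
    · refine ⟨s ∩ h n, Set.inter_subset_left, hi, ?_⟩
      rintro x rfl ⟨-, hsp2⟩
      exact hsp2 (Set.Finite.subset (Set.finite_empty) (by rintro y ⟨⟨-, hy⟩, hny⟩; exact absurd hy hny))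
    · refine ⟨s \ h n, Set.diff_subset, ?_, ?_⟩
      · have := hs.diff hfin
        rwa [Set.diff_self_inter] at this
      · rintro x rfl ⟨hsp1, -⟩
        exact hsp1 (Set.Finite.subset (Set.finite_empty) (by rintro y ⟨⟨-, hy⟩, hny⟩; exact absurd hny hy))
  obtain ⟨b, hbinf, hb⟩ := chain_lemma (fun n => {h n}) hstep
  obtain ⟨x, hxF, hsp⟩ := hFsplit b hbinf
  rw [hhr] at hxF
  obtain ⟨n, rfl⟩ := hxF
  exact hb n _ rfl hsp


/-- The splitting number has uncountable cofinality. -/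
theorem stmt10 : Cardinal.aleph0 < (Cardinal.ord sNum).cof := by
  by_contra hlt
  rw [not_lt] at hlt
  obtain ⟨F, hFsplit, hFmk⟩ := sNum_mem
  have haleph := aleph0_lt_sNum
  have holim : Order.IsSuccLimit (Cardinal.ord sNum) := Cardinal.isSuccLimit_ord haleph.le
  obtain ⟨ι, f, hlsub, hmk⟩ := Ordinal.exists_lsub_cof (Cardinal.ord sNum)
  have hιcount : Countable ι := Cardinal.mk_le_aleph0_iff.mp (hmk ▸ hlt)
  have hιne : Nonempty ι := by
    by_contra hne
    have hemp : IsEmpty ι := not_nonempty_iff.mp hne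
    have h0 : Ordinal.lsub f = 0 := Ordinal.lsub_empty f
    rw [hlsub] at h0
    exact holim.pos.ne' h0
  obtain ⟨g, hgsurj⟩ := exists_surjective_nat ι
  set f' : ℕ → Ordinal := fun n => f (g n) with hf'
  have hf'lt : ∀ n, f' n < Cardinal.ord sNum := by
    intro n; rw [← hlsub]; exact Ordinal.lt_lsub f (g n)
  have hcofinal : ∀ β < Cardinal.ord sNum, ∃ n, β ≤ f' n := by
    intro β hβ
    rw [← hlsub, Ordinal.lt_lsub_iff] at hβ
    obtain ⟨i, hi⟩ := hβ
    obtain ⟨n, rfl⟩ := hgsurj i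
    exact ⟨n, hi⟩
  -- enumerate F along sNum.ord
  have hcard : Cardinal.mk ((Cardinal.ord sNum).ToType) = Cardinal.mk (↥F) := by
    rw [Cardinal.mk_toType, Cardinal.card_ord, hFmk]
  obtain ⟨e⟩ : Nonempty ((Cardinal.ord sNum).ToType ≃ ↥F) := Cardinal.eq.mp hcard
  haveI instwo : IsWellOrder (Cardinal.ord sNum).ToType (· < ·) := isWellOrder_lt
  set tIn : (Cardinal.ord sNum).ToType → Ordinal :=
    fun j => Ordinal.typein (α := (Cardinal.ord sNum).ToType) (· < ·) j with htIn
  have htlt : ∀ j, tIn j < Cardinal.ord sNum := fun j => Ordinal.typein_lt_self j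
  have htinj : Function.Injective tIn := Ordinal.typein_injective _
  set G : ℕ → Set (Set ℕ) := fun n =>
    {x : Set ℕ | ∃ hx : x ∈ F, tIn (e.symm ⟨x, hx⟩) ≤ f' n} with hG
  have hsmall : ∀ n, Cardinal.mk (G n) < sNum := by
    intro n
    have hβ : f' n + 1 < Cardinal.ord sNum := by
      have := holim.succ_lt (hf'lt n)
      rwa [Order.succ_eq_add_one] at this
    set j : ↥(G n) → (f' n + 1).ToType := fun p =>
      (Ordinal.ToType.mk (o := f' n + 1))
        ⟨tIn (e.symm ⟨p.1, p.2.choose⟩),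
          Set.mem_Iio.mpr (lt_of_le_of_lt p.2.choose_spec (Order.lt_succ _))⟩ with hj
    have hjinj : Function.Injective j := by
      intro p q hpq
      have h1 := (Ordinal.ToType.mk (o := f' n + 1)).injective hpq
      have h2 := Subtype.ext_iff.mp h1
      have h3 := htinj h2
      have h4 := e.symm.injective h3
      have h5 : (p : Set ℕ) = (q : Set ℕ) := by
        have := congrArg (fun z : ↥F => (z : Set ℕ)) h4
        simpa using this
      exact Subtype.ext h5
    calc Cardinal.mk (G n) ≤ Cardinal.mk ((f' n + 1).ToType) := Cardinal.mk_le_of_injective hjinj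
      _ = (f' n + 1).card := Cardinal.mk_toType _
      _ < sNum := Cardinal.lt_ord.mp hβ
  have hcover : ∀ x, x ∈ F → ∃ n, x ∈ G n := by
    intro x hx
    obtain ⟨n, hn⟩ := hcofinal (tIn (e.symm ⟨x, hx⟩)) (htlt _)
    exact ⟨n, hx, hn⟩
  obtain ⟨b, hbinf, hb⟩ := chain_lemma G (fun n s hs => step_lemma (hsmall n) s hs)
  obtain ⟨x, hxF, hsp⟩ := hFsplit b hbinf
  obtain ⟨n, hn⟩ := hcover x hxF
  exact hb n x hn hsp
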